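/- Let c ∈ (0,1) and let A_c⁺ be the linear map of ℝ² given by the matrix [[1, −√(1−c)/√c], [0, 1/√c]], and set μ_c⁺ = arccos(√(1−c))/π ∈ (0, 1/2). Then (A_c⁺)^{−1} V_{1/2} = V_{μ_c⁺}, i.e. the preimage of the quarter-plane cone under A_c⁺ is the infinite cone with vertex at the origin and opening angle μ_c⁺ π. Moreover: (a) P_c⁺(A_c⁺ x) = |x|²/2 for all x ∈ V_{μ_c⁺}, where P_c⁺(y) = |y|²/2 + √(1−c) y₁ y₂; (b) |A_c⁺ x|²/2 = |x|²/2 for all x ∈ ∂V_{μ_c⁺}; consequently, if u ∈ C²(V_{1/2}) ∩ C(closure V_{1/2}) is a convex solution of det D²u = c in V_{1/2} with u(y) = |y|²/2 on ∂V_{1/2}, then u_c := u ∘ A_c⁺ satisfies det D²u_c = 1 in V_{μ_c⁺} and u_c(x) = |x|²/2 on ∂V_{μ_c⁺}. -/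

import Mathlib

open Real Set Metric Filter

noncomputable section

/-- The point of the Euclidean plane with Cartesian coordinates `(a, b)`. -/
def pt2 (a b : ℝ) : EuclideanSpace ℝ (Fin 2) := WithLp.toLp 2 ![a, b]

/-- `Cone μ` is the open infinite cone `V_μ` with vertex at the origin and
opening angle `μ * π`. -/
def Cone (μ : ℝ) : Set (EuclideanSpace ℝ (Fin 2)) :=
  {x | ∃ r θ : ℝ, 0 < r ∧ 0 < θ ∧ θ < μ * π ∧ x 0 = r * Real.cos θ ∧ x 1 = r * Real.sin θ}

/-- The angular coordinate `θ(x) ∈ [0, π]` of a point of the (closed) upper half plane;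
on `closure (Cone μ) \ {0}` (with `μ < 1`) it is the polar angle of `x`. -/
def angle2 (x : EuclideanSpace ℝ (Fin 2)) : ℝ := Real.arccos (x 0 / ‖x‖)

/-- The second partial derivatives (Hessian matrix entries) of `u` at `x`. -/
def hess2 (u : EuclideanSpace ℝ (Fin 2) → ℝ) (x : EuclideanSpace ℝ (Fin 2)) (i j : Fin 2) : ℝ :=
  fderiv ℝ (fun y => fderiv ℝ u y (EuclideanSpace.single j 1)) x (EuclideanSpace.single i 1)

/-- The Monge–Ampère operator `det D²u` in the plane. -/
def detD2 (u : EuclideanSpace ℝ (Fin 2) → ℝ) (x : EuclideanSpace ℝ (Fin 2)) : ℝ :=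
  hess2 u x 0 0 * hess2 u x 1 1 - hess2 u x 0 1 * hess2 u x 1 0

/-- `v ∈ C^{2,α}(s)` : `v` is `C²` on `s` with `α`-Hölder continuous second derivatives. -/
def C2Holder (v : EuclideanSpace ℝ (Fin 2) → ℝ) (s : Set (EuclideanSpace ℝ (Fin 2)))
    (α : ℝ) : Prop :=
  ContDiffOn ℝ 2 v s ∧
    ∃ C : NNReal, ∀ i j : Fin 2, HolderOnWith C α.toNNReal (fun x => hess2 v x i j) s

/-- `μs` is a strictly increasing enumeration (indexed from `1`) of the set `I`. -/
def IsEnum (I : Set ℝ) (μs : ℕ → ℝ) : Prop :=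
  (∀ n, 1 ≤ n → μs n ∈ I) ∧ (∀ y ∈ I, ∃ n, 1 ≤ n ∧ μs n = y) ∧
    (∀ m n, 1 ≤ m → m < n → μs m < μs n)
/-- Squared norm in coordinates. -/
lemma norm_sq2 (x : EuclideanSpace ℝ (Fin 2)) : ‖x‖ ^ 2 = x 0 ^ 2 + x 1 ^ 2 := by
  rw [EuclideanSpace.norm_eq, Real.sq_sqrt (by positivity)]
  simp [Fin.sum_univ_two, sq_abs]

/-- Half-plane characterization of the cone. -/
lemma cone_mem_iff {μ : ℝ} (h0 : 0 < μ) (h1 : μ < 1) (x : EuclideanSpace ℝ (Fin 2)) :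
    x ∈ Cone μ ↔ 0 < x 1 ∧ 0 < x 0 * Real.sin (μ * π) - x 1 * Real.cos (μ * π) := by
  have hπ := Real.pi_pos
  have hμπ0 : 0 < μ * π := by positivity
  have hμπ1 : μ * π < π := by nlinarith
  constructor
  · rintro ⟨r, θ, hr, hθ0, hθ1, hx0, hx1⟩
    have hs : 0 < Real.sin θ := Real.sin_pos_of_pos_of_lt_pi hθ0 (by linarith)
    refine ⟨by rw [hx1]; positivity, ?_⟩
    have h : x 0 * Real.sin (μ * π) - x 1 * Real.cos (μ * π) = r * Real.sin (μ * π - θ) := by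
      rw [hx0, hx1, Real.sin_sub]; ring
    rw [h]
    have : 0 < Real.sin (μ * π - θ) :=
      Real.sin_pos_of_pos_of_lt_pi (by linarith) (by linarith)
    positivity
  · rintro ⟨hx1, hL⟩
    set r := Real.sqrt (x 0 ^ 2 + x 1 ^ 2) with hr
    have hr0 : 0 < r := Real.sqrt_pos.2 (by nlinarith)
    have hrr : r ^ 2 = x 0 ^ 2 + x 1 ^ 2 := Real.sq_sqrt (by positivity)
    have hx0lt : x 0 < r := by nlinarith
    have hx0ge : -r < x 0 := by nlinarith
    have hq : -1 ≤ x 0 / r := by rw [le_div_iff₀ hr0]; nlinarith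
    have hq' : x 0 / r ≤ 1 := by rw [div_le_iff₀ hr0]; nlinarith
    set θ := Real.arccos (x 0 / r) with hθ
    have hcos : Real.cos θ = x 0 / r := Real.cos_arccos hq hq'
    have hsin : Real.sin θ = x 1 / r := by
      rw [hθ, Real.sin_arccos]
      rw [show 1 - (x 0 / r) ^ 2 = (x 1 / r) ^ 2 by field_simp; nlinarith]
      exact Real.sqrt_sq (by positivity)
    have hθpos : 0 < θ := Real.arccos_pos.2 (by rw [div_lt_iff₀ hr0]; nlinarith)
    have hθpi : θ ≤ π := Real.arccos_le_pi _
    have hθlt : θ < μ * π := by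
      by_contra h
      push_neg at h
      have hn : Real.sin (μ * π - θ) ≤ 0 :=
        Real.sin_nonpos_of_nonpos_of_neg_pi_le (by linarith) (by linarith)
      have he : Real.sin (μ * π - θ)
          = (x 0 * Real.sin (μ * π) - x 1 * Real.cos (μ * π)) / r := by
        rw [Real.sin_sub, hcos, hsin]; field_simp
      nlinarith [div_pos hL hr0]
    exact ⟨r, θ, hr0, hθpos, hθlt, by rw [hcos]; field_simp, by rw [hsin]; field_simp⟩

/-- The linear change of variables, as a continuous linear map. -/
def Lmap (p q : ℝ) : EuclideanSpace ℝ (Fin 2) →L[ℝ] EuclideanSpace ℝ (Fin 2) :=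
  LinearMap.toContinuousLinearMap
  { toFun := fun x => pt2 (x 0 + p * x 1) (q * x 1)
    map_add' := by
      intro x y
      ext i
      fin_cases i <;> simp [pt2] <;> ring
    map_smul' := by
      intro a x
      ext i
      fin_cases i <;> simp [pt2] <;> ring }

lemma Lmap_apply (p q : ℝ) (x : EuclideanSpace ℝ (Fin 2)) :
    Lmap p q x = pt2 (x 0 + p * x 1) (q * x 1) := rfl

lemma fderiv_fderiv_apply (u : EuclideanSpace ℝ (Fin 2) → ℝ)
    (x : EuclideanSpace ℝ (Fin 2)) (h : DifferentiableAt ℝ (fderiv ℝ u) x)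
    (v w : EuclideanSpace ℝ (Fin 2)) :
    fderiv ℝ (fun z => fderiv ℝ u z v) x w = fderiv ℝ (fderiv ℝ u) x w v := by
  have e : (fun z => fderiv ℝ u z v) =
      (ContinuousLinearMap.apply ℝ ℝ v) ∘ (fderiv ℝ u) := rfl
  rw [e, fderiv_comp x (ContinuousLinearMap.differentiableAt _) h]
  simp

lemma hess2_comp (u : EuclideanSpace ℝ (Fin 2) → ℝ)
    (L : EuclideanSpace ℝ (Fin 2) →L[ℝ] EuclideanSpace ℝ (Fin 2))
    (s : Set (EuclideanSpace ℝ (Fin 2))) (hs : IsOpen s)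
    (x : EuclideanSpace ℝ (Fin 2)) (hx : x ∈ s)
    (hd1 : ∀ y ∈ s, DifferentiableAt ℝ u (L y))
    (hd2 : DifferentiableAt ℝ (fderiv ℝ u) (L x)) (i j : Fin 2) :
    hess2 (u ∘ ⇑L) x i j =
      fderiv ℝ (fderiv ℝ u) (L x) (L (EuclideanSpace.single i 1))
        (L (EuclideanSpace.single j 1)) := by
  set Ei := EuclideanSpace.single i (1:ℝ)
  set Ej := EuclideanSpace.single j (1:ℝ)
  have hev : (fun y => fderiv ℝ (u ∘ ⇑L) y Ej) =ᶠ[nhds x]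
      (fun y => fderiv ℝ u (L y) (L Ej)) := by
    filter_upwards [hs.mem_nhds hx] with y hy
    rw [fderiv_comp y (hd1 y hy) L.differentiableAt, L.fderiv]
    rfl
  have hcomp : (fun y => fderiv ℝ u (L y) (L Ej)) =
      (fun z => fderiv ℝ u z (L Ej)) ∘ ⇑L := rfl
  have hdiff : DifferentiableAt ℝ (fun z => fderiv ℝ u z (L Ej)) (L x) := by
    have e : (fun z => fderiv ℝ u z (L Ej)) =
        (ContinuousLinearMap.apply ℝ ℝ (L Ej)) ∘ (fderiv ℝ u) := rfl
    rw [e]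
    exact (ContinuousLinearMap.differentiableAt _).comp _ hd2
  calc hess2 (u ∘ ⇑L) x i j
      = fderiv ℝ (fun y => fderiv ℝ u (L y) (L Ej)) x Ei := by
        unfold hess2; rw [hev.fderiv_eq]
    _ = fderiv ℝ (fun z => fderiv ℝ u z (L Ej)) (L x) (L Ei) := by
        rw [hcomp, fderiv_comp x hdiff L.differentiableAt, L.fderiv]; rfl
    _ = fderiv ℝ (fderiv ℝ u) (L x) (L Ei) (L Ej) :=
        fderiv_fderiv_apply u (L x) hd2 _ _

/-- The change of variables `A_c⁺` with matrix `[[1, -√(1-c)/√c], [0, 1/√c]]`: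
it maps `V_{μ_c⁺}` (with `μ_c⁺ = arccos(√(1-c))/π ∈ (0, 1/2)`) onto the quarter plane
`V_{1/2}`, pulls `P_c⁺(y) = |y|²/2 + √(1-c) y₁y₂` back to `|x|²/2`, preserves `|x|²/2`
on `∂V_{μ_c⁺}`, and transforms convex solutions of `det D²u = c` in `V_{1/2}` with
boundary data `|y|²/2` into solutions of `det D²u_c = 1` in `V_{μ_c⁺}` with boundary
data `|x|²/2`, where `u_c = u ∘ A_c⁺`. -/
theorem affine_normalization
    (c : ℝ) (hc : c ∈ Set.Ioo (0 : ℝ) 1)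
    (A : EuclideanSpace ℝ (Fin 2) → EuclideanSpace ℝ (Fin 2))
    (hA : ∀ x, A x = pt2 (x 0 - Real.sqrt (1 - c) / Real.sqrt c * x 1) (x 1 / Real.sqrt c))
    (μc : ℝ) (hμc : μc = Real.arccos (Real.sqrt (1 - c)) / π) :
    (0 < μc ∧ μc < 1 / 2) ∧
    A ⁻¹' Cone (1 / 2) = Cone μc ∧
    (∀ x ∈ Cone μc,
      ‖A x‖ ^ 2 / 2 + Real.sqrt (1 - c) * (A x 0 * A x 1) = ‖x‖ ^ 2 / 2) ∧
    (∀ x ∈ frontier (Cone μc), ‖A x‖ ^ 2 / 2 = ‖x‖ ^ 2 / 2) ∧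
    (∀ u : EuclideanSpace ℝ (Fin 2) → ℝ,
      ContDiffOn ℝ 2 u (Cone (1 / 2)) →
      ContinuousOn u (closure (Cone (1 / 2))) →
      ConvexOn ℝ (Cone (1 / 2)) u →
      (∀ y ∈ Cone (1 / 2), detD2 u y = c) →
      (∀ y ∈ frontier (Cone (1 / 2)), u y = ‖y‖ ^ 2 / 2) →
      (∀ x ∈ Cone μc, detD2 (u ∘ A) x = 1) ∧
      (∀ x ∈ frontier (Cone μc), (u ∘ A) x = ‖x‖ ^ 2 / 2)) := by
  obtain ⟨hc0, hc1⟩ := hc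
  set s := Real.sqrt (1 - c) with hsdef
  set k := Real.sqrt c with hkdef
  have hk0 : 0 < k := Real.sqrt_pos.2 hc0
  have hk2 : k * k = c := Real.mul_self_sqrt hc0.le
  have hs2 : s * s = 1 - c := Real.mul_self_sqrt (by linarith)
  have hs0 : 0 < s := Real.sqrt_pos.2 (by linarith)
  have hs1 : s < 1 := by nlinarith
  have hkne : k ≠ 0 := ne_of_gt hk0
  have hπ := Real.pi_pos
  have hμπ : μc * π = Real.arccos s := by
    rw [hμc]; field_simp
  have hμ0 : 0 < μc := by
    have h := Real.arccos_pos.2 hs1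
    rw [hμc]; positivity
  have hμhalf : μc < 1 / 2 := by
    have h2 : Real.arccos s < π / 2 := Real.arccos_lt_pi_div_two.2 hs0
    rw [hμc, div_lt_iff₀ hπ]; linarith
  have hμ1 : μc < 1 := by linarith
  have hcos : Real.cos (μc * π) = s := by
    rw [hμπ]; exact Real.cos_arccos (by linarith) hs1.le
  have hsin : Real.sin (μc * π) = k := by
    rw [hμπ, Real.sin_arccos, show 1 - s ^ 2 = c by rw [sq]; linarith]
  have hmemμ : ∀ x : EuclideanSpace ℝ (Fin 2),
      x ∈ Cone μc ↔ 0 < x 1 ∧ 0 < x 0 * k - x 1 * s := by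
    intro x; rw [cone_mem_iff hμ0 hμ1, hcos, hsin]
  have hmem12 : ∀ y : EuclideanSpace ℝ (Fin 2),
      y ∈ Cone (1 / 2) ↔ 0 < y 1 ∧ 0 < y 0 := by
    intro y
    rw [cone_mem_iff (by norm_num) (by norm_num),
      show (1 / 2 : ℝ) * π = π / 2 by ring, Real.sin_pi_div_two, Real.cos_pi_div_two]
    constructor <;> rintro ⟨h1, h2⟩ <;> exact ⟨h1, by linarith⟩
  have hA0 : ∀ x : EuclideanSpace ℝ (Fin 2), A x 0 = x 0 - s / k * x 1 := fun x => by
    rw [hA]; rfl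
  have hA1 : ∀ x : EuclideanSpace ℝ (Fin 2), A x 1 = x 1 / k := fun x => by
    rw [hA]; rfl
  have hid1 : ∀ x0 x1 : ℝ, (x0 - s / k * x1) * k = x0 * k - x1 * s := by
    intro x0 x1; field_simp
  have hpre : A ⁻¹' Cone (1 / 2) = Cone μc := by
    ext x
    rw [Set.mem_preimage, hmem12, hmemμ, hA0, hA1]
    constructor
    · rintro ⟨h1, h2⟩
      have h1' : 0 < x 1 / k * k := mul_pos h1 hk0
      rw [div_mul_cancel₀ _ hkne] at h1'
      have h2' : 0 < (x 0 - s / k * x 1) * k := mul_pos h2 hk0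
      rw [hid1] at h2'
      exact ⟨h1', h2'⟩
    · rintro ⟨h1, h2⟩
      refine ⟨div_pos h1 hk0, ?_⟩
      have he : x 0 - s / k * x 1 = (x 0 * k - x 1 * s) / k := by
        field_simp
      rw [he]
      exact div_pos h2 hk0
  have hop : ∀ μ : ℝ, 0 < μ → μ < 1 → IsOpen (Cone μ) := by
    intro μ a b
    have he : Cone μ = {x : EuclideanSpace ℝ (Fin 2) | 0 < x 1} ∩
        {x | 0 < x 0 * Real.sin (μ * π) - x 1 * Real.cos (μ * π)} := by
      ext x
      rw [cone_mem_iff a b]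
      simp [Set.mem_inter_iff, Set.mem_setOf_eq]
    rw [he]
    exact (isOpen_lt continuous_const
        (show Continuous (fun x : EuclideanSpace ℝ (Fin 2) => x 1) by fun_prop)).inter
      (isOpen_lt continuous_const
        (show Continuous (fun x : EuclideanSpace ℝ (Fin 2) =>
          x 0 * Real.sin (μ * π) - x 1 * Real.cos (μ * π)) by fun_prop))
  have hopμ := hop μc hμ0 hμ1
  have hop12 := hop (1 / 2) (by norm_num) (by norm_num)
  have hcl : closure (Cone μc) ⊆
      {x : EuclideanSpace ℝ (Fin 2) | 0 ≤ x 1 ∧ 0 ≤ x 0 * k - x 1 * s} := by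
    apply closure_minimal
    · intro x hx
      have h := (hmemμ x).1 hx
      exact ⟨h.1.le, h.2.le⟩
    · exact (isClosed_le continuous_const
        (show Continuous (fun x : EuclideanSpace ℝ (Fin 2) => x 1) by fun_prop)).inter
        (isClosed_le continuous_const
          (show Continuous (fun x : EuclideanSpace ℝ (Fin 2) => x 0 * k - x 1 * s) by fun_prop))
  have hfront : ∀ x ∈ frontier (Cone μc),
      (0 ≤ x 1 ∧ 0 ≤ x 0 * k - x 1 * s) ∧ (x 1 = 0 ∨ x 0 * k - x 1 * s = 0) := by
    intro x hx
    have h1 := hcl (frontier_subset_closure hx)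
    have h2 : x ∉ Cone μc := by
      intro h; exact hx.2 (by rwa [hopμ.interior_eq])
    rw [hmemμ] at h2
    push_neg at h2
    refine ⟨h1, ?_⟩
    rcases eq_or_lt_of_le h1.1 with h | h
    · exact Or.inl h.symm
    · exact Or.inr (le_antisymm (h2 h) h1.2)
  have part4 : ∀ x ∈ frontier (Cone μc), ‖A x‖ ^ 2 / 2 = ‖x‖ ^ 2 / 2 := by
    intro x hx
    obtain ⟨-, hcase⟩ := hfront x hx
    rw [norm_sq2 (A x), norm_sq2 x, hA0, hA1]
    rcases hcase with h | h
    · rw [h]; field_simp; ring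
    · have hx0 : x 0 * k = x 1 * s := by linarith
      field_simp
      linear_combination (-2 * x 1 * s) * hx0 + (-(x 1) ^ 2) * hk2 +
        (-(x 1) ^ 2) * hs2
  have part3 : ∀ x : EuclideanSpace ℝ (Fin 2),
      ‖A x‖ ^ 2 / 2 + s * (A x 0 * A x 1) = ‖x‖ ^ 2 / 2 := by
    intro x
    rw [norm_sq2 (A x), norm_sq2 x, hA0, hA1]
    field_simp
    linear_combination (-(x 1) ^ 2) * hs2 + (-(x 1) ^ 2) * hk2
  set L := Lmap (-(s / k)) (1 / k) with hLdef
  have hLA : A = ⇑L := by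
    funext x
    rw [hA x, hLdef, Lmap_apply,
      show x 0 - s / k * x 1 = x 0 + -(s / k) * x 1 from by ring,
      show x 1 / k = 1 / k * x 1 from by ring]
  refine ⟨⟨hμ0, hμhalf⟩, hpre, fun x _ => part3 x, part4, ?_⟩
  intro u hu hucont huconv hMA hub
  constructor
  · -- Monge–Ampère equation for u ∘ A
    intro x hx
    have hAx : A x ∈ Cone (1 / 2) := by
      rw [← hpre] at hx; exact hx
    have hLx : L x ∈ Cone (1 / 2) := by rw [← hLA]; exact hAx
    have hd1 : ∀ y ∈ Cone μc, DifferentiableAt ℝ u (L y) := by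
      intro y hy
      have hLy : L y ∈ Cone (1 / 2) := by
        rw [← hLA]
        rw [← hpre] at hy
        exact hy
      exact (hu.contDiffAt (hop12.mem_nhds hLy)).differentiableAt (by norm_num)
    have hfd : ContDiffOn ℝ 1 (fderiv ℝ u) (Cone (1 / 2)) :=
      hu.fderiv_of_isOpen hop12 (by norm_num)
    have hd2 : DifferentiableAt ℝ (fderiv ℝ u) (L x) :=
      (hfd.contDiffAt (hop12.mem_nhds hLx)).differentiableAt (by norm_num)
    set H := fderiv ℝ (fderiv ℝ u) (L x) with hH
    have hh : ∀ i j : Fin 2, hess2 (u ∘ ⇑L) x i j =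
        H (L (EuclideanSpace.single i 1)) (L (EuclideanSpace.single j 1)) :=
      fun i j => hess2_comp u L (Cone μc) hopμ x hx hd1 hd2 i j
    have hhu : ∀ i j : Fin 2, hess2 u (L x) i j =
        H (EuclideanSpace.single i 1) (EuclideanSpace.single j 1) := by
      intro i j
      exact fderiv_fderiv_apply u (L x) hd2 _ _
    set e0 : EuclideanSpace ℝ (Fin 2) := EuclideanSpace.single (0 : Fin 2) (1 : ℝ) with he0
    set e1 : EuclideanSpace ℝ (Fin 2) := EuclideanSpace.single (1 : Fin 2) (1 : ℝ) with he1
    have hLe0 : L e0 = e0 := by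
      rw [hLdef, Lmap_apply]
      ext i
      fin_cases i <;> simp [pt2, he0, EuclideanSpace.single_apply]
    have hLe1 : L e1 = (-(s / k)) • e0 + (1 / k) • e1 := by
      rw [hLdef, Lmap_apply]
      ext i
      fin_cases i <;>
        simp [pt2, he0, he1, EuclideanSpace.single_apply] <;> ring
    have E00 : hess2 (u ∘ ⇑L) x 0 0 = H e0 e0 := by rw [hh 0 0, hLe0]
    have E01 : hess2 (u ∘ ⇑L) x 0 1 = -(s / k) * H e0 e0 + 1 / k * H e0 e1 := by
      rw [hh 0 1, hLe0, hLe1, map_add, map_smul, map_smul]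
      simp [smul_eq_mul]
    have E10 : hess2 (u ∘ ⇑L) x 1 0 = -(s / k) * H e0 e0 + 1 / k * H e1 e0 := by
      rw [hh 1 0, hLe0, hLe1, map_add, map_smul, map_smul]
      simp [ContinuousLinearMap.add_apply, ContinuousLinearMap.smul_apply, smul_eq_mul]
    have E11 : hess2 (u ∘ ⇑L) x 1 1 =
        -(s / k) * (-(s / k) * H e0 e0 + 1 / k * H e0 e1) +
          1 / k * (-(s / k) * H e1 e0 + 1 / k * H e1 e1) := by
      rw [hh 1 1, hLe1, map_add, map_smul, map_smul]
      simp [ContinuousLinearMap.add_apply, ContinuousLinearMap.smul_apply, smul_eq_mul,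
        map_add, map_smul]
      try ring
    have hcu : detD2 u (L x) = c := hMA (L x) hLx
    have hcu' : H e0 e0 * H e1 e1 - H e0 e1 * H e1 e0 = c := by
      rw [← hcu]
      unfold detD2
      rw [hhu 0 0, hhu 1 1, hhu 0 1, hhu 1 0]
    have hdet : detD2 (u ∘ ⇑L) x * (k * k) =
        H e0 e0 * H e1 e1 - H e0 e1 * H e1 e0 := by
      unfold detD2
      rw [E00, E01, E10, E11]
      field_simp
      ring
    have hgoal : detD2 (u ∘ ⇑L) x * c = c := by
      rw [← hk2, hdet, hcu', hk2]
    rw [hLA]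
    exact mul_right_cancel₀ (ne_of_gt hc0) (by rw [one_mul]; exact hgoal)
  · -- boundary values of u ∘ A
    intro x hx
    have hAcont : Continuous A := by rw [hLA]; exact L.continuous
    have hAxcl : A x ∈ closure (Cone (1 / 2)) := by
      have h1 : x ∈ closure (A ⁻¹' Cone (1 / 2)) := by
        rw [hpre]; exact frontier_subset_closure hx
      exact hAcont.closure_preimage_subset (Cone (1 / 2)) h1
    have hAxo : A x ∉ Cone (1 / 2) := by
      intro h
      have hxm : x ∈ Cone μc := by rw [← hpre]; exact h
      exact hx.2 (by rwa [hopμ.interior_eq])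
    have hfr : A x ∈ frontier (Cone (1 / 2)) :=
      ⟨hAxcl, by rwa [hop12.interior_eq]⟩
    calc (u ∘ A) x = u (A x) := rfl
      _ = ‖A x‖ ^ 2 / 2 := hub (A x) hfr
      _ = ‖x‖ ^ 2 / 2 := part4 x hx
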